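/- For every τ in the upper half-plane ℍ, λ(τ) ≠ 1 and λ(τ+1) = λ(τ)/(λ(τ) − 1). -/

import Mathlib

open Complex Real

section Aux

noncomputable def Tt (s : ℝ) (τ : ℂ) (n : ℤ) : ℂ :=
  Complex.exp (Real.pi * Complex.I * ((n : ℂ) + s) ^ 2 * τ)

lemma summable_norm_Tt (s : ℝ) {τ : ℂ} (hτ : 0 < τ.im) :
    Summable fun n : ℤ => ‖Tt s τ n‖ := by
  have hjt : Summable fun n : ℤ => ‖jacobiTheta₂_term n ((s : ℂ) * τ) τ‖ := by
    apply Summable.of_nonneg_of_le (fun n => norm_nonneg _)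
      (fun n => by
        simpa only [pow_zero, one_mul] using
          norm_jacobiTheta₂_term_le hτ (le_refl |((s : ℂ) * τ).im|) (le_refl τ.im) n)
    exact (summable_pow_mul_jacobiTheta₂_term_bound |((s : ℂ) * τ).im| hτ 0).congr
      (fun n => by simp)
  have key : ∀ n : ℤ, Tt s τ n = jacobiTheta₂_term n ((s : ℂ) * τ) τ *
      Complex.exp (Real.pi * Complex.I * (s : ℂ) ^ 2 * τ) := by
    intro n
    rw [Tt, jacobiTheta₂_term, ← Complex.exp_add]
    congr 1
    ring
  refine (hjt.mul_right ‖Complex.exp (Real.pi * Complex.I * (s : ℂ) ^ 2 * τ)‖).congr fun n => ?_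
  rw [key n, norm_mul]

lemma tsum_mul_tsum_parity (f g u v w x : ℤ → ℂ)
    (hf : Summable fun n => ‖f n‖) (hg : Summable fun n => ‖g n‖)
    (hu : Summable fun n => ‖u n‖) (hv : Summable fun n => ‖v n‖)
    (hw : Summable fun n => ‖w n‖) (hx : Summable fun n => ‖x n‖)
    (h1 : ∀ a b : ℤ, f (a + b) * g (a - b) = u a * v b)
    (h2 : ∀ a b : ℤ, f (a + b + 1) * g (a - b) = w a * x b) :
    (∑' n, f n) * (∑' n, g n) =
      (∑' n, u n) * (∑' n, v n) + (∑' n, w n) * (∑' n, x n) := by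
  classical
  set F : ℤ × ℤ → ℂ := fun p => f p.1 * g p.2 with hF
  have hFs : Summable F := (hf.mul_norm hg).of_norm
  set S : Set (ℤ × ℤ) := {p | Even (p.1 + p.2)} with hS
  have hsplit : (∑' p, F p) = (∑' p, S.indicator F p) + ∑' p, Sᶜ.indicator F p := by
    rw [← Summable.tsum_add (hFs.indicator S) (hFs.indicator Sᶜ)]
    exact tsum_congr fun p => (Set.indicator_self_add_compl_apply S F p).symm
  have hi : Function.Injective (fun q : ℤ × ℤ => ((q.1 + q.2, q.1 - q.2) : ℤ × ℤ)) := by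
    intro ⟨a, b⟩ ⟨c, d⟩ h
    simp only [Prod.mk.injEq] at h ⊢
    omega
  have hj : Function.Injective (fun q : ℤ × ℤ => ((q.1 + q.2 + 1, q.1 - q.2) : ℤ × ℤ)) := by
    intro ⟨a, b⟩ ⟨c, d⟩ h
    simp only [Prod.mk.injEq] at h ⊢
    omega
  have hisupp : Function.support (S.indicator F) ⊆
      Set.range (fun q : ℤ × ℤ => ((q.1 + q.2, q.1 - q.2) : ℤ × ℤ)) := by
    intro p hp
    have hpS : p ∈ S := Set.support_indicator_subset hp
    obtain ⟨k, hk⟩ := hpS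
    refine ⟨(k, p.1 - k), ?_⟩
    show ((k + (p.1 - k), k - (p.1 - k)) : ℤ × ℤ) = p
    rw [Prod.ext_iff]
    constructor <;> simp <;> omega
  have hjsupp : Function.support (Sᶜ.indicator F) ⊆
      Set.range (fun q : ℤ × ℤ => ((q.1 + q.2 + 1, q.1 - q.2) : ℤ × ℤ)) := by
    intro p hp
    have hpS : p ∈ Sᶜ := Set.support_indicator_subset hp
    have hodd : ¬ Even (p.1 + p.2) := hpS
    rw [Int.even_iff] at hodd
    refine ⟨((p.1 + p.2 - 1) / 2, (p.1 - p.2 - 1) / 2), ?_⟩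
    show (((p.1 + p.2 - 1) / 2 + (p.1 - p.2 - 1) / 2 + 1,
        (p.1 + p.2 - 1) / 2 - (p.1 - p.2 - 1) / 2) : ℤ × ℤ) = p
    rw [Prod.ext_iff]
    constructor <;> simp <;> omega
  have heven : (∑' p, S.indicator F p) = (∑' n, u n) * (∑' n, v n) :=
    calc ∑' p, S.indicator F p
        = ∑' q : ℤ × ℤ, S.indicator F (q.1 + q.2, q.1 - q.2) := (hi.tsum_eq hisupp).symm
      _ = ∑' q : ℤ × ℤ, u q.1 * v q.2 := by
          refine tsum_congr fun q => ?_
          have hmem : ((q.1 + q.2, q.1 - q.2) : ℤ × ℤ) ∈ S := ⟨q.1, by ring⟩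
          rw [Set.indicator_of_mem hmem, hF]
          exact h1 q.1 q.2
      _ = (∑' n, u n) * (∑' n, v n) := (tsum_mul_tsum_of_summable_norm hu hv).symm
  have hodd : (∑' p, Sᶜ.indicator F p) = (∑' n, w n) * (∑' n, x n) :=
    calc ∑' p, Sᶜ.indicator F p
        = ∑' q : ℤ × ℤ, Sᶜ.indicator F (q.1 + q.2 + 1, q.1 - q.2) := (hj.tsum_eq hjsupp).symm
      _ = ∑' q : ℤ × ℤ, w q.1 * x q.2 := by
          refine tsum_congr fun q => ?_
          have hmem : ((q.1 + q.2 + 1, q.1 - q.2) : ℤ × ℤ) ∈ Sᶜ := by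
            simp only [hS, Set.mem_compl_iff, Set.mem_setOf_eq]
            rw [Int.even_iff]
            omega
          rw [Set.indicator_of_mem hmem, hF]
          exact h2 q.1 q.2
      _ = (∑' n, w n) * (∑' n, x n) := (tsum_mul_tsum_of_summable_norm hw hx).symm
  rw [tsum_mul_tsum_of_summable_norm hf hg, hsplit, heven, hodd]

end Aux

noncomputable def theta00 (τ : ℂ) : ℂ :=
  ∑' n : ℤ, Complex.exp (Real.pi * Complex.I * (n : ℂ) ^ 2 * τ)

/-- Theta constant `θ01(τ) = ∑_{n∈ℤ} (−1)ⁿ exp(πi n² τ)`. -/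
noncomputable def theta01 (τ : ℂ) : ℂ :=
  ∑' n : ℤ, (-1 : ℂ) ^ n * Complex.exp (Real.pi * Complex.I * (n : ℂ) ^ 2 * τ)

/-- Theta constant `θ10(τ) = ∑_{n∈ℤ} exp(πi (n+1/2)² τ)`. -/
noncomputable def theta10 (τ : ℂ) : ℂ :=
  ∑' n : ℤ, Complex.exp (Real.pi * Complex.I * ((n : ℂ) + 1/2) ^ 2 * τ)

/-- The lambda function `λ(τ) = θ10(τ)⁴ / θ00(τ)⁴`. -/
noncomputable def lambdaFn (τ : ℂ) : ℂ := theta10 τ ^ 4 / theta00 τ ^ 4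

section Aux2
lemma neg_one_zpow_mul_self (a : ℤ) : (-1 : ℂ) ^ a * (-1 : ℂ) ^ a = 1 := by
  rw [← zpow_add₀ (by norm_num : (-1 : ℂ) ≠ 0), (by ring : a + a = 2 * a), zpow_mul]
  norm_num

lemma neg_one_zpow_neg (a : ℤ) : (-1 : ℂ) ^ (-a) = (-1 : ℂ) ^ a := by
  rw [zpow_neg]
  exact inv_eq_of_mul_eq_one_left (neg_one_zpow_mul_self a)

lemma neg_one_zpow_add (a b : ℤ) : (-1 : ℂ) ^ (a + b) = (-1 : ℂ) ^ a * (-1 : ℂ) ^ b :=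
  zpow_add₀ (by norm_num) a b

lemma neg_one_zpow_sub (a b : ℤ) : (-1 : ℂ) ^ (a - b) = (-1 : ℂ) ^ a * (-1 : ℂ) ^ b := by
  rw [sub_eq_add_neg, neg_one_zpow_add, neg_one_zpow_neg]

lemma neg_one_zpow_even {m : ℤ} (hm : Even m) : (-1 : ℂ) ^ m = 1 := by
  obtain ⟨k, rfl⟩ := hm
  rw [(by ring : k + k = 2 * k), zpow_mul]
  norm_num

lemma exp_int_pi (m : ℤ) : Complex.exp ((m : ℂ) * (Real.pi * Complex.I)) = (-1 : ℂ) ^ m := by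
  rw [Complex.exp_int_mul, Complex.exp_pi_mul_I]

lemma neg_one_zpow_sq (n : ℤ) : (-1 : ℂ) ^ (n ^ 2) = (-1 : ℂ) ^ n := by
  have he : Even (n ^ 2 - n) := by
    have := Int.even_mul_succ_self (n - 1)
    have h : (n - 1) * (n - 1 + 1) = n ^ 2 - n := by ring
    rwa [h] at this
  calc (-1 : ℂ) ^ (n ^ 2) = (-1 : ℂ) ^ (n ^ 2 - n) * (-1 : ℂ) ^ n := by
        rw [← neg_one_zpow_add, sub_add_cancel]
    _ = (-1 : ℂ) ^ n := by rw [neg_one_zpow_even he, one_mul]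

lemma theta00_add_one (τ : ℂ) : theta00 (τ + 1) = theta01 τ := by
  unfold theta00 theta01
  refine tsum_congr fun n => ?_
  have h1 : (Real.pi : ℂ) * Complex.I * (n : ℂ) ^ 2 * (τ + 1)
      = Real.pi * Complex.I * (n : ℂ) ^ 2 * τ + ((n ^ 2 : ℤ) : ℂ) * (Real.pi * Complex.I) := by
    push_cast; ring
  rw [h1, Complex.exp_add, exp_int_pi, neg_one_zpow_sq]
  ring

lemma theta01_add_one (τ : ℂ) : theta01 (τ + 1) = theta00 τ := by
  unfold theta00 theta01
  refine tsum_congr fun n => ?_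
  have h1 : (Real.pi : ℂ) * Complex.I * (n : ℂ) ^ 2 * (τ + 1)
      = Real.pi * Complex.I * (n : ℂ) ^ 2 * τ + ((n ^ 2 : ℤ) : ℂ) * (Real.pi * Complex.I) := by
    push_cast; ring
  rw [h1, Complex.exp_add, exp_int_pi, neg_one_zpow_sq]
  calc (-1 : ℂ) ^ n * (Complex.exp (Real.pi * Complex.I * (n : ℂ) ^ 2 * τ) * (-1 : ℂ) ^ n)
      = ((-1 : ℂ) ^ n * (-1 : ℂ) ^ n) * Complex.exp (Real.pi * Complex.I * (n : ℂ) ^ 2 * τ) := by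
        ring
    _ = _ := by rw [neg_one_zpow_mul_self]; ring

lemma theta10_add_one (τ : ℂ) :
    theta10 (τ + 1) = Complex.exp (Real.pi * Complex.I / 4) * theta10 τ := by
  unfold theta10
  rw [← tsum_mul_left]
  refine tsum_congr fun n => ?_
  have h1 : (Real.pi : ℂ) * Complex.I * ((n : ℂ) + 1/2) ^ 2 * (τ + 1)
      = Real.pi * Complex.I / 4 + (Real.pi * Complex.I * ((n : ℂ) + 1/2) ^ 2 * τ
        + ((n ^ 2 + n : ℤ) : ℂ) * (Real.pi * Complex.I)) := by
    push_cast; ring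
  rw [h1, Complex.exp_add, Complex.exp_add, exp_int_pi]
  have he : Even (n ^ 2 + n) := by
    have := Int.even_mul_succ_self n
    have h : n * (n + 1) = n ^ 2 + n := by ring
    rwa [h] at this
  rw [neg_one_zpow_even he, mul_one]

lemma sumnorm00 {τ : ℂ} (hτ : 0 < τ.im) :
    Summable fun n : ℤ => ‖Complex.exp (Real.pi * Complex.I * (n : ℂ) ^ 2 * τ)‖ :=
  (summable_norm_Tt 0 hτ).congr fun n => by norm_num [Tt]

lemma sumnorm01 {τ : ℂ} (hτ : 0 < τ.im) :
    Summable fun n : ℤ =>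
      ‖(-1 : ℂ) ^ n * Complex.exp (Real.pi * Complex.I * (n : ℂ) ^ 2 * τ)‖ :=
  (sumnorm00 hτ).congr fun n => by
    rw [norm_mul]
    norm_num

lemma sumnorm10 {τ : ℂ} (hτ : 0 < τ.im) :
    Summable fun n : ℤ => ‖Complex.exp (Real.pi * Complex.I * ((n : ℂ) + 1/2) ^ 2 * τ)‖ :=
  (summable_norm_Tt (1/2) hτ).congr fun n => by norm_num [Tt]

lemma sumnorm_shift {τ : ℂ} (hτ : 0 < τ.im) :
    Summable fun n : ℤ => ‖Complex.exp (Real.pi * Complex.I * ((n : ℂ) + 1) ^ 2 * τ)‖ :=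
  (summable_norm_Tt 1 hτ).congr fun n => by norm_num [Tt]

lemma im_two_mul {τ : ℂ} (hτ : 0 < τ.im) : 0 < ((2 : ℂ) * τ).im := by
  simp only [Complex.mul_im, Complex.re_ofNat, Complex.im_ofNat]
  linarith

lemma theta00_sq {τ : ℂ} (hτ : 0 < τ.im) :
    theta00 τ ^ 2 = theta00 (2 * τ) ^ 2 + theta10 (2 * τ) ^ 2 := by
  have h2τ := im_two_mul hτ
  rw [sq, sq, sq]
  unfold theta00 theta10
  refine tsum_mul_tsum_parity _ _ _ _ _ _ (sumnorm00 hτ) (sumnorm00 hτ)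
    (sumnorm00 h2τ) (sumnorm00 h2τ) (sumnorm10 h2τ) (sumnorm10 h2τ) ?_ ?_
  · intro a b
    rw [← Complex.exp_add, ← Complex.exp_add]
    congr 1
    push_cast
    ring
  · intro a b
    rw [← Complex.exp_add, ← Complex.exp_add]
    congr 1
    push_cast
    ring

lemma theta01_sq {τ : ℂ} (hτ : 0 < τ.im) :
    theta01 τ ^ 2 = theta00 (2 * τ) ^ 2 - theta10 (2 * τ) ^ 2 := by
  have h2τ := im_two_mul hτ
  have key : theta01 τ * theta01 τ = theta00 (2 * τ) * theta00 (2 * τ) +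
      (∑' n : ℤ, -Complex.exp (Real.pi * Complex.I * ((n : ℂ) + 1/2) ^ 2 * (2 * τ))) *
      (∑' n : ℤ, Complex.exp (Real.pi * Complex.I * ((n : ℂ) + 1/2) ^ 2 * (2 * τ))) := by
    unfold theta00 theta01
    refine tsum_mul_tsum_parity _ _ _ _ _ _ (sumnorm01 hτ) (sumnorm01 hτ)
      (sumnorm00 h2τ) (sumnorm00 h2τ) ((sumnorm10 h2τ).congr fun n => (norm_neg _).symm)
      (sumnorm10 h2τ) ?_ ?_
    · intro a b
      have hE : Complex.exp (Real.pi * Complex.I * ((a + b : ℤ) : ℂ) ^ 2 * τ) *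
          Complex.exp (Real.pi * Complex.I * ((a - b : ℤ) : ℂ) ^ 2 * τ)
          = Complex.exp (Real.pi * Complex.I * (a : ℂ) ^ 2 * (2 * τ)) *
            Complex.exp (Real.pi * Complex.I * (b : ℂ) ^ 2 * (2 * τ)) := by
        rw [← Complex.exp_add, ← Complex.exp_add]; congr 1; push_cast; ring
      calc ((-1 : ℂ) ^ (a + b) * _) * ((-1 : ℂ) ^ (a - b) * _)
          = ((-1 : ℂ) ^ a * (-1 : ℂ) ^ a) * (((-1 : ℂ) ^ b * (-1 : ℂ) ^ b)) *
            (Complex.exp (Real.pi * Complex.I * ((a + b : ℤ) : ℂ) ^ 2 * τ) *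
             Complex.exp (Real.pi * Complex.I * ((a - b : ℤ) : ℂ) ^ 2 * τ)) := by
            rw [neg_one_zpow_add, neg_one_zpow_sub]; ring
        _ = _ := by rw [neg_one_zpow_mul_self, neg_one_zpow_mul_self, hE]; ring
    · intro a b
      have hE : Complex.exp (Real.pi * Complex.I * ((a + b + 1 : ℤ) : ℂ) ^ 2 * τ) *
          Complex.exp (Real.pi * Complex.I * ((a - b : ℤ) : ℂ) ^ 2 * τ)
          = Complex.exp (Real.pi * Complex.I * ((a : ℂ) + 1/2) ^ 2 * (2 * τ)) *
            Complex.exp (Real.pi * Complex.I * ((b : ℂ) + 1/2) ^ 2 * (2 * τ)) := by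
        rw [← Complex.exp_add, ← Complex.exp_add]; congr 1; push_cast; ring
      calc ((-1 : ℂ) ^ (a + b + 1) * _) * ((-1 : ℂ) ^ (a - b) * _)
          = -(((-1 : ℂ) ^ a * (-1 : ℂ) ^ a) * (((-1 : ℂ) ^ b * (-1 : ℂ) ^ b)) *
            (Complex.exp (Real.pi * Complex.I * ((a + b + 1 : ℤ) : ℂ) ^ 2 * τ) *
             Complex.exp (Real.pi * Complex.I * ((a - b : ℤ) : ℂ) ^ 2 * τ))) := by
            rw [neg_one_zpow_add, neg_one_zpow_add, neg_one_zpow_sub, zpow_one]; ring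
        _ = _ := by rw [neg_one_zpow_mul_self, neg_one_zpow_mul_self, hE]; ring
  rw [sq, sq, sq, key, tsum_neg]
  unfold theta10
  ring

lemma theta10_sq {τ : ℂ} (hτ : 0 < τ.im) :
    theta10 τ ^ 2 = 2 * theta00 (2 * τ) * theta10 (2 * τ) := by
  have h2τ := im_two_mul hτ
  have key : theta10 τ * theta10 τ =
      theta10 (2 * τ) * theta00 (2 * τ) +
      (∑' n : ℤ, Complex.exp (Real.pi * Complex.I * ((n : ℂ) + 1) ^ 2 * (2 * τ))) *
        theta10 (2 * τ) := by
    unfold theta00 theta10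
    refine tsum_mul_tsum_parity _ _ _ _ _ _ (sumnorm10 hτ) (sumnorm10 hτ)
      (sumnorm10 h2τ) (sumnorm00 h2τ) (sumnorm_shift h2τ) (sumnorm10 h2τ) ?_ ?_
    · intro a b
      rw [← Complex.exp_add, ← Complex.exp_add]; congr 1; push_cast; ring
    · intro a b
      rw [← Complex.exp_add, ← Complex.exp_add]; congr 1; push_cast; ring
  have hshift : (∑' n : ℤ, Complex.exp (Real.pi * Complex.I * ((n : ℂ) + 1) ^ 2 * (2 * τ)))
      = theta00 (2 * τ) := by
    unfold theta00
    rw [← (Equiv.addRight (1 : ℤ)).tsum_eq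
      (fun n : ℤ => Complex.exp (Real.pi * Complex.I * (n : ℂ) ^ 2 * (2 * τ)))]
    refine tsum_congr fun n => ?_
    have : ((Equiv.addRight (1 : ℤ)) n : ℂ) = (n : ℂ) + 1 := by
      simp [Equiv.coe_addRight]
    rw [this]
  rw [sq, key, hshift]
  ring

lemma half_sum_zero (τ' : ℂ) :
    (∑' a : ℤ, (-1 : ℂ) ^ a *
      Complex.exp (Real.pi * Complex.I * ((a : ℂ) + 1/2) ^ 2 * τ')) = 0 := by
  set f : ℤ → ℂ := fun a => (-1 : ℂ) ^ a *
      Complex.exp (Real.pi * Complex.I * ((a : ℂ) + 1/2) ^ 2 * τ') with hf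
  set e : Equiv.Perm ℤ := Function.Involutive.toPerm (fun a => -1 - a)
    (fun a => by ring) with he
  have h1 : ∑' a, f (e a) = ∑' a, f a := e.tsum_eq f
  have h2 : ∀ a : ℤ, f (e a) = -f a := by
    intro a
    have hcoe : (e a : ℤ) = -1 - a := rfl
    rw [hcoe, hf]
    simp only
    have hs : (-1 : ℂ) ^ (-1 - a) = -(-1 : ℂ) ^ a := by
      rw [(by ring : (-1 : ℤ) - a = -(1 + a)), neg_one_zpow_neg, neg_one_zpow_add, zpow_one]
      ring
    have hE : Complex.exp (Real.pi * Complex.I * (((-1 - a : ℤ) : ℂ) + 1/2) ^ 2 * τ')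
        = Complex.exp (Real.pi * Complex.I * ((a : ℂ) + 1/2) ^ 2 * τ') := by
      congr 1; push_cast; ring
    rw [hs, hE]
    ring
  have h3 : ∑' a, f a = -∑' a, f a :=
    calc ∑' a, f a = ∑' a, f (e a) := h1.symm
      _ = ∑' a, -f a := tsum_congr h2
      _ = -∑' a, f a := tsum_neg
  have h4 : (2 : ℂ) * ∑' a, f a = 0 := by linear_combination h3
  have := mul_eq_zero.mp h4
  simpa using this

lemma theta00_mul_theta01 {τ : ℂ} (hτ : 0 < τ.im) :
    theta00 τ * theta01 τ = theta01 (2 * τ) ^ 2 := by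
  have h2τ := im_two_mul hτ
  have key : theta00 τ * theta01 τ = theta01 (2 * τ) * theta01 (2 * τ) +
      (∑' a : ℤ, (-1 : ℂ) ^ a *
        Complex.exp (Real.pi * Complex.I * ((a : ℂ) + 1/2) ^ 2 * (2 * τ))) *
      (∑' a : ℤ, (-1 : ℂ) ^ a *
        Complex.exp (Real.pi * Complex.I * ((a : ℂ) + 1/2) ^ 2 * (2 * τ))) := by
    unfold theta00 theta01
    have hsgn10 : Summable fun n : ℤ => ‖(-1 : ℂ) ^ n *
        Complex.exp (Real.pi * Complex.I * ((n : ℂ) + 1/2) ^ 2 * (2 * τ))‖ :=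
      (sumnorm10 h2τ).congr fun n => by rw [norm_mul]; norm_num
    refine tsum_mul_tsum_parity _ _ _ _ _ _ (sumnorm00 hτ) (sumnorm01 hτ)
      (sumnorm01 h2τ) (sumnorm01 h2τ) hsgn10 hsgn10 ?_ ?_
    · intro a b
      have hE : Complex.exp (Real.pi * Complex.I * ((a + b : ℤ) : ℂ) ^ 2 * τ) *
          Complex.exp (Real.pi * Complex.I * ((a - b : ℤ) : ℂ) ^ 2 * τ)
          = Complex.exp (Real.pi * Complex.I * (a : ℂ) ^ 2 * (2 * τ)) *
            Complex.exp (Real.pi * Complex.I * (b : ℂ) ^ 2 * (2 * τ)) := by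
        rw [← Complex.exp_add, ← Complex.exp_add]; congr 1; push_cast; ring
      calc Complex.exp (Real.pi * Complex.I * ((a + b : ℤ) : ℂ) ^ 2 * τ) *
            ((-1 : ℂ) ^ (a - b) * Complex.exp (Real.pi * Complex.I * ((a - b : ℤ) : ℂ) ^ 2 * τ))
          = ((-1 : ℂ) ^ a * (-1 : ℂ) ^ b) *
            (Complex.exp (Real.pi * Complex.I * ((a + b : ℤ) : ℂ) ^ 2 * τ) *
             Complex.exp (Real.pi * Complex.I * ((a - b : ℤ) : ℂ) ^ 2 * τ)) := by
            rw [neg_one_zpow_sub]; ring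
        _ = _ := by rw [hE]; ring
    · intro a b
      have hE : Complex.exp (Real.pi * Complex.I * ((a + b + 1 : ℤ) : ℂ) ^ 2 * τ) *
          Complex.exp (Real.pi * Complex.I * ((a - b : ℤ) : ℂ) ^ 2 * τ)
          = Complex.exp (Real.pi * Complex.I * ((a : ℂ) + 1/2) ^ 2 * (2 * τ)) *
            Complex.exp (Real.pi * Complex.I * ((b : ℂ) + 1/2) ^ 2 * (2 * τ)) := by
        rw [← Complex.exp_add, ← Complex.exp_add]; congr 1; push_cast; ring
      calc Complex.exp (Real.pi * Complex.I * ((a + b + 1 : ℤ) : ℂ) ^ 2 * τ) *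
            ((-1 : ℂ) ^ (a - b) * Complex.exp (Real.pi * Complex.I * ((a - b : ℤ) : ℂ) ^ 2 * τ))
          = ((-1 : ℂ) ^ a * (-1 : ℂ) ^ b) *
            (Complex.exp (Real.pi * Complex.I * ((a + b + 1 : ℤ) : ℂ) ^ 2 * τ) *
             Complex.exp (Real.pi * Complex.I * ((a - b : ℤ) : ℂ) ^ 2 * τ)) := by
            rw [neg_one_zpow_sub]; ring
        _ = _ := by rw [hE]; ring
  rw [key, half_sum_zero, sq]
  unfold theta01
  ring

lemma jacobi_identity {τ : ℂ} (hτ : 0 < τ.im) :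
    theta00 τ ^ 4 = theta01 τ ^ 4 + theta10 τ ^ 4 := by
  have e3 := theta00_sq hτ
  have e4 := theta01_sq hτ
  have e5 := theta10_sq hτ
  set A := theta00 (2 * τ)
  set B := theta10 (2 * τ)
  linear_combination (theta00 τ ^ 2 + A ^ 2 + B ^ 2) * e3 -
    (theta01 τ ^ 2 + A ^ 2 - B ^ 2) * e4 - (theta10 τ ^ 2 + 2 * A * B) * e5

lemma norm_theta_term (n : ℤ) (τ : ℂ) :
    ‖Complex.exp (Real.pi * Complex.I * (n : ℂ) ^ 2 * τ)‖
      = Real.exp (-(Real.pi * (n : ℝ) ^ 2 * τ.im)) := by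
  have hcast : (Real.pi : ℂ) * Complex.I * (n : ℂ) ^ 2 * τ
      = ((Real.pi * (n : ℝ) ^ 2 : ℝ) : ℂ) * (τ * Complex.I) := by push_cast; ring
  rw [hcast, Complex.norm_exp, Complex.re_ofReal_mul,
    Complex.mul_I_re]
  congr 1
  ring

lemma theta01_ne_zero_of_one_le {τ : ℂ} (hτ : 0 < τ.im) (h1 : 1 ≤ τ.im) : theta01 τ ≠ 0 := by
  classical
  set r : ℝ := Real.exp (-3) with hr
  have hr0 : 0 ≤ r := le_of_lt (Real.exp_pos _)
  have hr1 : r < 1 := Real.exp_lt_one_iff.mpr (by norm_num)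
  have hr3 : r < 1 / 3 := by
    have h4 : (3 : ℝ) + 1 ≤ Real.exp 3 := Real.add_one_le_exp 3
    have : Real.exp (-3) = (Real.exp 3)⁻¹ := by rw [Real.exp_neg]
    rw [hr, this]
    rw [inv_lt_iff_one_lt_mul₀ (by positivity)]
    linarith
  set σ : ℝ := r * (1 - r)⁻¹ with hσ
  set g : ℤ → ℝ := fun n => if n = 0 then 0 else r ^ n.natAbs with hg
  have hgeo : HasSum (fun n : ℕ => r ^ (n + 1)) σ := by
    have := (hasSum_geometric_of_lt_one hr0 hr1).mul_left r
    simpa [pow_succ, mul_comm] using this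
  have hpos : HasSum (fun n : ℕ => g n) σ := by
    have hshift : HasSum (fun n : ℕ => g ((n : ℤ) + 1)) σ := by
      have heq : (fun n : ℕ => g ((n : ℤ) + 1)) = fun n : ℕ => r ^ (n + 1) := by
        funext n
        have hne : ((n : ℤ) + 1) ≠ 0 := by omega
        have hab : ((n : ℤ) + 1).natAbs = n + 1 := by omega
        simp only [hg, hne, if_false, hab]
      rw [heq]
      exact hgeo
    have heq2 : (fun n : ℕ => g ((n : ℤ) + 1)) = fun n : ℕ => g ((n + 1 : ℕ) : ℤ) := by
      funext n; push_cast; ring_nf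
    rw [heq2] at hshift
    have := (hasSum_nat_add_iff (f := fun n : ℕ => g n) 1).mp hshift
    simpa [hg] using this
  have hneg : HasSum (fun n : ℕ => g (-((n : ℤ) + 1))) σ := by
    have heq : (fun n : ℕ => g (-((n : ℤ) + 1))) = fun n : ℕ => r ^ (n + 1) := by
      funext n
      have hne : (-((n : ℤ) + 1)) ≠ 0 := by omega
      have hab : (-((n : ℤ) + 1)).natAbs = n + 1 := by omega
      simp only [hg, hne, if_false, hab]
    rw [heq]
    exact hgeo
  have htot : HasSum g (σ + σ) := HasSum.of_nat_of_neg_add_one hpos hneg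
  have hsum : Summable fun n : ℤ =>
      (-1 : ℂ) ^ n * Complex.exp (Real.pi * Complex.I * (n : ℂ) ^ 2 * τ) :=
    (sumnorm01 hτ).of_norm
  have hsplit : theta01 τ = 1 + ∑' n : ℤ, (if n = 0 then 0 else
      (-1 : ℂ) ^ n * Complex.exp (Real.pi * Complex.I * (n : ℂ) ^ 2 * τ)) := by
    have := Summable.tsum_eq_add_tsum_ite hsum 0
    rw [theta01, this]
    norm_num
  have hbound : ∀ n : ℤ, ‖(if n = 0 then 0 else
      (-1 : ℂ) ^ n * Complex.exp (Real.pi * Complex.I * (n : ℂ) ^ 2 * τ))‖ ≤ g n := by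
    intro n
    by_cases hn : n = 0
    · simp [hn, hg]
    · rw [if_neg hn, hg]
      simp only [hn, if_false]
      rw [norm_mul]
      have hz : ‖(-1 : ℂ) ^ n‖ = 1 := by norm_num
      rw [hz, one_mul, norm_theta_term]
      have hrpow : r ^ n.natAbs = Real.exp (-(3 * (n.natAbs : ℝ))) := by
        rw [hr, ← Real.exp_nat_mul]
        congr 1
        ring
      rw [hrpow, Real.exp_le_exp]
      have hna : (1 : ℝ) ≤ (n.natAbs : ℝ) := by
        have : 1 ≤ n.natAbs := by omega
        exact_mod_cast this
      have hnsq : ((n : ℝ)) ^ 2 = ((n.natAbs : ℝ)) ^ 2 := by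
        rw [Nat.cast_natAbs]
        push_cast
        rw [_root_.sq_abs]
      have hpi := Real.pi_gt_three
      rw [hnsq]
      set m : ℝ := (n.natAbs : ℝ) with hm
      have hstep1 : 3 * m ≤ 3 * m ^ 2 := by nlinarith
      have hstep2 : 3 * m ^ 2 ≤ Real.pi * m ^ 2 := by nlinarith
      have hstep3 : Real.pi * m ^ 2 ≤ Real.pi * m ^ 2 * τ.im := by nlinarith
      linarith
  have hlt : ‖theta01 τ - 1‖ < 1 := by
    have hle : ‖∑' n : ℤ, (if n = 0 then 0 else
        (-1 : ℂ) ^ n * Complex.exp (Real.pi * Complex.I * (n : ℂ) ^ 2 * τ))‖ ≤ σ + σ :=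
      tsum_of_norm_bounded htot hbound
    have h2σ : σ + σ < 1 := by
      have h1r : 0 < 1 - r := by linarith
      have : σ + σ = 2 * r / (1 - r) := by
        rw [hσ]; field_simp; ring
      rw [this, div_lt_one h1r]
      linarith
    calc ‖theta01 τ - 1‖ = ‖∑' n : ℤ, (if n = 0 then 0 else
          (-1 : ℂ) ^ n * Complex.exp (Real.pi * Complex.I * (n : ℂ) ^ 2 * τ))‖ := by
          rw [hsplit, add_sub_cancel_left]
      _ ≤ σ + σ := hle
      _ < 1 := h2σ
  intro h0
  rw [h0] at hlt
  norm_num at hlt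

lemma theta01_pow_two_mul (k : ℕ) :
    ∀ τ : ℂ, 0 < τ.im → theta01 τ = 0 → theta01 ((2 ^ k : ℂ) * τ) = 0 := by
  induction k with
  | zero => intro τ hτ h0; simpa using h0
  | succ k ih =>
    intro τ hτ h0
    have h2 : theta01 (2 * τ) = 0 := by
      have := theta00_mul_theta01 hτ
      rw [h0, mul_zero] at this
      exact pow_eq_zero_iff (n := 2) (by norm_num) |>.mp this.symm
    have := ih (2 * τ) (im_two_mul hτ) h2
    rw [pow_succ, mul_assoc]
    exact this
  
lemma theta01_ne_zero {τ : ℂ} (hτ : 0 < τ.im) : theta01 τ ≠ 0 := by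
  intro h0
  obtain ⟨k, hk⟩ := pow_unbounded_of_one_lt (1 / τ.im) (by norm_num : (1 : ℝ) < 2)
  have him : ((2 ^ k : ℂ) * τ).im = (2 ^ k : ℝ) * τ.im := by
    have : ((2 ^ k : ℂ)) = (((2 ^ k : ℝ)) : ℂ) := by push_cast; ring
    rw [this, Complex.im_ofReal_mul]
  have hpos : 0 < ((2 ^ k : ℂ) * τ).im := by
    rw [him]; positivity
  have hone : 1 ≤ ((2 ^ k : ℂ) * τ).im := by
    rw [him]
    rw [div_lt_iff₀ hτ] at hk
    nlinarith
  exact theta01_ne_zero_of_one_le hpos hone (theta01_pow_two_mul k τ hτ h0)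

lemma theta00_ne_zero {τ : ℂ} (hτ : 0 < τ.im) : theta00 τ ≠ 0 := by
  have h : theta00 ((τ - 1) + 1) = theta01 (τ - 1) := theta00_add_one (τ - 1)
  rw [sub_add_cancel] at h
  rw [h]
  apply theta01_ne_zero
  simpa using hτ

end Aux2

/-- `λ(τ) ≠ 1` and `λ(τ+1) = λ(τ)/(λ(τ)−1)` on the upper half-plane. -/
theorem lambda_T_action (τ : ℂ) (hτ : 0 < τ.im) :
    lambdaFn τ ≠ 1 ∧ lambdaFn (τ + 1) = lambdaFn τ / (lambdaFn τ - 1) := by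
  have ha : theta00 τ ≠ 0 := theta00_ne_zero hτ
  have hb : theta01 τ ≠ 0 := theta01_ne_zero hτ
  have hJ : theta00 τ ^ 4 = theta01 τ ^ 4 + theta10 τ ^ 4 := jacobi_identity hτ
  have ha4 : theta00 τ ^ 4 ≠ 0 := pow_ne_zero _ ha
  have hb4 : theta01 τ ^ 4 ≠ 0 := pow_ne_zero _ hb
  constructor
  · intro h
    rw [lambdaFn, div_eq_one_iff_eq ha4] at h
    have hz : theta01 τ ^ 4 = 0 := by linear_combination -hJ - h
    exact hb4 hz
  · have E4 : Complex.exp (Real.pi * Complex.I / 4) ^ 4 = -1 := by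
      rw [← Complex.exp_nat_mul]
      rw [show ((4 : ℕ) : ℂ) * (Real.pi * Complex.I / 4) = Real.pi * Complex.I by
        push_cast; ring]
      exact Complex.exp_pi_mul_I
    have hL : lambdaFn (τ + 1) = -(theta10 τ ^ 4) / theta01 τ ^ 4 := by
      rw [lambdaFn, theta10_add_one, theta00_add_one, mul_pow, E4]
      ring_nf
    have hden : lambdaFn τ - 1 = -(theta01 τ ^ 4) / theta00 τ ^ 4 := by
      rw [lambdaFn]
      field_simp
      linear_combination -hJ
    rw [hL, hden, lambdaFn]
    rw [div_div_div_eq]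
    rw [show theta00 τ ^ 4 * -theta01 τ ^ 4 = -theta01 τ ^ 4 * theta00 τ ^ 4 from mul_comm _ _,
      mul_div_mul_right _ _ ha4, div_neg, neg_div]
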